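/- arXiv:1512.07577 — 2 statements merged into one kernel-verified Lean document; each statement's English description precedes it below -/
import Mathlib

section
/- Let X be a complete decomposition space. Then X_n is the disjoint union, over all subsets {j_1 < ⋯ < j_k} of {0,…,n−1}, of the images s_{j_k}⋯s_{j_1}(→X_{n−k}), and each composite degeneracy s_{j_k}⋯s_{j_1} is injective on →X_{n−k}; i.e. every n-simplex is uniquely an iterated degeneracy of an effective simplex. -/
open CategoryTheory CategoryTheory.Limits Simplicial Opposite

/-- A map in the simplex category is *generic* if it preserves the endpoints. -/
def IsGeneric {a b : SimplexCategory} (g : a ⟶ b) : Prop :=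
  g.toOrderHom 0 = 0 ∧ g.toOrderHom (Fin.last a.len) = Fin.last b.len

/-- A map in the simplex category is *free* if it is distance preserving. -/
def IsFree {a b : SimplexCategory} (f : a ⟶ b) : Prop :=
  ∀ i : Fin (a.len + 1), (f.toOrderHom i : ℕ) = (f.toOrderHom 0 : ℕ) + (i : ℕ)

/-- A decomposition space is a simplicial set carrying every pushout in `Δ` of a
generic map `g` along a free map `f` to a pullback of sets. -/
def IsDecomposition (X : SSet) : Prop :=
  ∀ ⦃a b c d : SimplexCategory⦄ (g : a ⟶ b) (f : a ⟶ c) (h : b ⟶ d) (k : c ⟶ d),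
    IsGeneric g → IsFree f → IsPushout g f h k →
    IsPullback (X.map h.op) (X.map k.op) (X.map g.op) (X.map f.op)

/-- A simplicial set is *complete* if all degeneracy maps are injective. -/
def Complete (X : SSet) : Prop :=
  ∀ (n : ℕ) (i : Fin (n + 1)), Function.Injective (X.σ i : X _⦋n⦌ ⟶ X _⦋n + 1⦌)

/-- The free map `[1] → [n]` sending `0, 1` to `i, i+1`; it induces the map
taking the `i`-th principal edge (`0`-indexed) of an `n`-simplex. -/
def principalEdge (n : ℕ) (i : Fin n) : (⦋1⦌ : SimplexCategory) ⟶ ⦋n⦌ :=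
  SimplexCategory.mkHom
    { toFun := fun j => ⟨i.1 + j.1, by have := i.2; have := j.2; omega⟩
      monotone' := fun a b h => by
        simp only [Fin.mk_le_mk]
        exact Nat.add_le_add_left h i.1 }

/-- The unique generic map `[1] → [n]` (`0 ↦ 0`, `1 ↦ n`); it induces the map
taking the long edge of an `n`-simplex. -/
def longEdgeMap (n : ℕ) : (⦋1⦌ : SimplexCategory) ⟶ ⦋n⦌ :=
  SimplexCategory.mkHom
    { toFun := fun j => ⟨j.1 * n, by
        have h := j.2
        have : j.1 * n ≤ 1 * n := Nat.mul_le_mul_right n (by omega)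
        omega⟩
      monotone' := fun a b h => by
        simp only [Fin.mk_le_mk]
        exact Nat.mul_le_mul_right n h }

/-- The alphabet `{0, 1, a}`: `z` prescribes a degenerate principal edge, `o` an
unrestricted one, `a` a nondegenerate one. -/
inductive Letter where
  | z
  | o
  | a
  deriving DecidableEq

/-- The subset of `X₁` prescribed by a letter. -/
def edgeSet (X : SSet) : Letter → Set (X _⦋1⦌) := fun l => match l with
  | .z => Set.range (X.σ (0 : Fin 1))
  | .o => Set.univ
  | .a => (Set.range (X.σ (0 : Fin 1)))ᶜ

/-- `X_w`, the set of `n`-simplices whose principal edges have the types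
prescribed by the word `w`. -/
def wordSet (X : SSet) {n : ℕ} (w : Fin n → Letter) : Set (X _⦋n⦌) :=
  {σ | ∀ i : Fin n, X.map (principalEdge n i).op σ ∈ edgeSet X (w i)}

/-- A simplex is *effective* if all its principal edges are nondegenerate. -/
def Effective (X : SSet) {n : ℕ} (σ : X _⦋n⦌) : Prop :=
  ∀ i : Fin n, X.map (principalEdge n i).op σ ∉ Set.range (X.σ (0 : Fin 1))

/-- The constant word `aa⋯a`. -/
def allA (n : ℕ) : Fin n → Letter := fun _ => Letter.a

/-- Concatenation of words. -/
def concatW {m n : ℕ} (v : Fin m → Letter) (v' : Fin n → Letter) : Fin (m + n) → Letter :=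
  fun i => if h : i.1 < m then v ⟨i.1, h⟩ else v' ⟨i.1 - m, by have := i.2; omega⟩

/-- The word `v ℓ v'` obtained by splicing a letter `ℓ` between the words `v` and `v'`. -/
def splice {m n : ℕ} (v : Fin m → Letter) (l : Letter) (v' : Fin n → Letter) :
    Fin (m + n + 1) → Letter :=
  fun i => if h : i.1 < m then v ⟨i.1, h⟩
    else if h2 : i.1 = m then l
    else v' ⟨i.1 - (m + 1), by have := i.2; omega⟩

/-- A simplex (of positive dimension) is degenerate if it is in the image of some
degeneracy map. -/
def Degen (X : SSet) {n : ℕ} (σ : X _⦋n + 1⦌) : Prop :=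
  ∃ i : Fin (n + 1), σ ∈ Set.range (X.σ i)

/-- A simplicial map is *cULF* if its naturality squares on all generic maps are
pullbacks. -/
def IsCULF {Y X : SSet} (f : Y ⟶ X) : Prop :=
  ∀ ⦃a b : SimplexCategory⦄ (g : a ⟶ b), IsGeneric g →
    IsPullback (f.app (op b)) (Y.map g.op) (X.map g.op) (f.app (op a))

/-- A simplicial map is *conservative* if its naturality squares on all degeneracy
maps are pullbacks. -/
def Conservative {Y X : SSet} (f : Y ⟶ X) : Prop :=
  ∀ (n : ℕ) (i : Fin (n + 1)),
    IsPullback (f.app (op (SimplexCategory.mk n))) (Y.σ i) (X.σ i)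
      (f.app (op (SimplexCategory.mk (n + 1))))

/-- A simplicial set is *stiff* if it carries every pushout in `Δ` of a codegeneracy
map along a free map to a pullback of sets. -/
def Stiff (X : SSet) : Prop :=
  ∀ (k : ℕ) (i : Fin (k + 1)) ⦃c d : SimplexCategory⦄
    (f : SimplexCategory.mk (k + 1) ⟶ c) (h : SimplexCategory.mk k ⟶ d) (j : c ⟶ d),
    IsFree f → IsPushout (SimplexCategory.σ i) f h j →
    IsPullback (X.map h.op) (X.map j.op) (X.map (SimplexCategory.σ i).op) (X.map f.op)

/-- The map `[0] → [n]` picking out the vertex `i`. -/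
def vertexMap (n : ℕ) (i : Fin (n + 1)) : (⦋0⦌ : SimplexCategory) ⟶ ⦋n⦌ :=
  SimplexCategory.mkHom ⟨fun _ => i, fun _ _ _ => le_refl _⟩

/-- The unique map `[n] → [0]`; it induces the iterated degeneracy `X₀ → Xₙ`. -/
def toZero (n : ℕ) : (⦋n⦌ : SimplexCategory) ⟶ ⦋0⦌ :=
  SimplexCategory.mkHom ⟨fun _ => 0, fun _ _ _ => le_refl _⟩

/-- The generic map `[2] → [m+n]` sending `0,1,2` to `0,m,m+n`. -/
def midMap (m n : ℕ) : (⦋2⦌ : SimplexCategory) ⟶ ⦋m + n⦌ :=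
  SimplexCategory.mkHom
    { toFun := fun j => ⟨if j.1 = 0 then 0 else if j.1 = 1 then m else m + n, by
        split
        · omega
        · split <;> omega⟩
      monotone' := by
        intro a b hab
        have h : a.1 ≤ b.1 := hab
        have ha := a.2
        have hb := b.2
        simp only [Fin.mk_le_mk]
        split <;> split <;> (try split) <;> (try split) <;> omega }

/-- The free map `[m] → [m+n]` onto the initial segment. -/
def freeInitial (m n : ℕ) : (⦋m⦌ : SimplexCategory) ⟶ ⦋m + n⦌ :=
  SimplexCategory.mkHom ⟨fun i => ⟨i.1, by have := i.2; omega⟩, fun a b h => h⟩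

/-- The free map `[n] → [m+n]` onto the final segment. -/
def freeFinal (m n : ℕ) : (⦋n⦌ : SimplexCategory) ⟶ ⦋m + n⦌ :=
  SimplexCategory.mkHom ⟨fun i => ⟨m + i.1, by have := i.2; omega⟩,
    fun a b h => by
      simp only [Fin.mk_le_mk]
      exact Nat.add_le_add_left h m⟩

/-- The word `1aa⋯a` (`n` letters `a`). -/
def oneA (n : ℕ) : Fin (n + 1) → Letter := fun i => if i.1 = 0 then Letter.o else Letter.a

/-- The word `0aa⋯a` (`n` letters `a`). -/
def zeroA (n : ℕ) : Fin (n + 1) → Letter := fun i => if i.1 = 0 then Letter.z else Letter.a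

/-- The word `aa⋯a1` (`n` letters `a`). -/
def aOne (n : ℕ) : Fin (n + 1) → Letter := fun i => if i.1 = n then Letter.o else Letter.a

/-- The word `aa⋯a0` (`n` letters `a`). -/
def aZero (n : ℕ) : Fin (n + 1) → Letter := fun i => if i.1 = n then Letter.z else Letter.a

/-- The number of letters `0` in a word. -/
def zcount {n : ℕ} (w : Fin n → Letter) : ℕ :=
  (Finset.univ.filter fun i => w i = Letter.z).card

/-- The surjection `[n] → [n - zcount w]` collapsing, for each position `j` with
`w j = 0`, the vertex `j+1` onto the vertex `j`; the induced map
`X_{n - zcount w} → X_n` is the iterated degeneracy `s_{j_k} ⋯ s_{j_1}` where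
`j_1 < ⋯ < j_k` are the positions of the letters `0` of `w`. -/
def collapseMap {n : ℕ} (w : Fin n → Letter) :
    (⦋n⦌ : SimplexCategory) ⟶ ⦋n - zcount w⦌ :=
  SimplexCategory.mkHom
    { toFun := fun t =>
        ⟨(Finset.univ.filter fun i : Fin n => i.1 < t.1 ∧ ¬ (w i = Letter.z)).card, by
          have h2 := Finset.card_filter_add_card_filter_not
            (s := (Finset.univ : Finset (Fin n))) (p := fun i => w i = Letter.z)
          have h1 : (Finset.univ.filter fun i : Fin n => i.1 < t.1 ∧ ¬ (w i = Letter.z)).card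
              ≤ (Finset.univ.filter fun i : Fin n => ¬ (w i = Letter.z)).card :=
            Finset.card_le_card (fun x hx => by
              simp only [Finset.mem_filter] at hx ⊢
              exact ⟨hx.1, hx.2.2⟩)
          have h3 : zcount w = (Finset.univ.filter fun i : Fin n => w i = Letter.z).card := rfl
          simp only [Finset.card_univ, Fintype.card_fin] at h2
          omega⟩
      monotone' := by
        intro a b hab
        have h : a.1 ≤ b.1 := hab
        simp only [Fin.mk_le_mk]
        exact Finset.card_le_card (fun x hx => by
          simp only [Finset.mem_filter] at hx ⊢
          exact ⟨hx.1, lt_of_lt_of_le hx.2.1 h, hx.2.2⟩) }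

/-- An edge has finite length if there is a bound on the dimensions of the effective
simplices having it as long edge. -/
def FiniteLength (X : SSet) (a : X _⦋1⦌) : Prop :=
  ∃ N : ℕ, ∀ (n : ℕ) (σ : X _⦋n⦌), Effective X σ →
    X.map (longEdgeMap n).op σ = a → n ≤ N

/-- A *tight* decomposition space: a complete decomposition space in which every edge
has finite length. -/
def Tight (X : SSet) : Prop :=
  IsDecomposition X ∧ Function.Injective (X.σ (0 : Fin 1) : X _⦋0⦌ ⟶ X _⦋1⦌) ∧
    ∀ a : X _⦋1⦌, FiniteLength X a

/-- The length of an edge: the supremum of the dimensions of effective simplices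
having it as long edge. -/
noncomputable def edgeLength (X : SSet) (a : X _⦋1⦌) : ℕ :=
  sSup {n | ∃ σ : X _⦋n⦌, Effective X σ ∧ X.map (longEdgeMap n).op σ = a}

/-- A complete simplicial set is *split* if all face maps preserve nondegenerate
simplices. -/
def Split (X : SSet) : Prop :=
  Complete X ∧ ∀ (n : ℕ) (i : Fin (n + 3)) (σ : X _⦋n + 2⦌),
    ¬ Degen X σ → ¬ Degen X (X.δ i σ)

/-- The counit: the indicator function of the degenerate edges. -/
noncomputable def epsFun (X : SSet) : X _⦋1⦌ → ℚ := fun f =>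
  haveI := Classical.propDecidable (f ∈ Set.range (X.σ (0 : Fin 1)))
  if f ∈ Set.range (X.σ (0 : Fin 1)) then 1 else 0

/-- Convolution product on `ℚ`-valued functions on `X₁`. -/
noncomputable def convFun (X : SSet) (φ ψ : X _⦋1⦌ → ℚ) : X _⦋1⦌ → ℚ :=
  fun f => ∑ᶠ σ ∈ (fun τ => X.δ (1 : Fin 3) τ) ⁻¹' {f},
    φ (X.δ (2 : Fin 3) σ) * ψ (X.δ (0 : Fin 3) σ)

/-- The Möbius function `Φ_even - Φ_odd`. -/
noncomputable def muFun (X : SSet) : X _⦋1⦌ → ℚ :=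
  fun f => ∑ᶠ n : ℕ, (-1 : ℚ) ^ n *
    (Nat.card {σ : X.obj (op (SimplexCategory.mk n)) // Effective X σ ∧ X.map (longEdgeMap n).op σ = f} : ℚ)

/-- The category `Δ_inj`: objects those of the simplex category, morphisms the
injective monotone maps. -/
structure DeltaInj : Type where
  /-- the underlying object of the simplex category -/
  obj : SimplexCategory

instance : Category DeltaInj where
  Hom a b := {f : a.obj ⟶ b.obj // Function.Injective f.toOrderHom}
  id a := ⟨𝟙 a.obj, by
    rw [SimplexCategory.id_toOrderHom]
    exact fun x y h => h⟩
  comp f g := ⟨f.1 ≫ g.1, by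
    rw [SimplexCategory.comp_toOrderHom]
    exact fun x y h => f.2 (g.2 h)⟩
  id_comp f := by apply Subtype.ext; simp
  comp_id f := by apply Subtype.ext; simp
  assoc f g h := by apply Subtype.ext; simp

/-- The inclusion functor `Δ_inj ⊆ Δ`. -/
def DeltaInj.incl : DeltaInj ⥤ SimplexCategory where
  obj a := a.obj
  map f := f.1

/-- A *semi-decomposition space*: a semi-simplicial set carrying every pushout in
`Δ_inj` of a generic (inner) face map along a free (outer) face map to a pullback. -/
def IsSemiDecomposition (Z : DeltaInjᵒᵖ ⥤ Type) : Prop :=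
  ∀ ⦃a b c d : DeltaInj⦄ (g : a ⟶ b) (f : a ⟶ c) (h : b ⟶ d) (k : c ⟶ d),
    IsGeneric g.1 → IsFree f.1 → IsPushout g f h k →
    IsPullback (Z.map h.op) (Z.map k.op) (Z.map g.op) (Z.map f.op)

/-- A map of semi-simplicial sets is *ULF* if its naturality squares on all generic
face maps are pullbacks. -/
def IsULF {Z W : DeltaInjᵒᵖ ⥤ Type} (φ : Z ⟶ W) : Prop :=
  ∀ ⦃a b : DeltaInj⦄ (g : a ⟶ b), IsGeneric g.1 →
    IsPullback (φ.app (op b)) (Z.map g.op) (W.map g.op) (φ.app (op a))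

lemma conservative_id (X : SSet) : Conservative (𝟙 X) := by
  intro n i
  exact IsPullback.of_horiz_isIso ⟨by simp⟩

lemma conservative_comp {X Y Z : SSet} {f : X ⟶ Y} {g : Y ⟶ Z}
    (hf : Conservative f) (hg : Conservative g) : Conservative (f ≫ g) := by
  intro n i
  simpa using IsPullback.paste_horiz (hf n i) (hg n i)

lemma isCULF_id (X : SSet) : IsCULF (𝟙 X) := by
  intro a b gm hgm
  exact IsPullback.of_horiz_isIso ⟨by simp⟩

lemma isCULF_comp {X Y Z : SSet} {f : X ⟶ Y} {g : Y ⟶ Z}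
    (hf : IsCULF f) (hg : IsCULF g) : IsCULF (f ≫ g) := by
  intro a b gm hgm
  simpa using IsPullback.paste_horiz (hf gm hgm) (hg gm hgm)

lemma isULF_id (Z : DeltaInjᵒᵖ ⥤ Type) : IsULF (𝟙 Z) := by
  intro a b gm hgm
  exact IsPullback.of_horiz_isIso ⟨by simp⟩

lemma isULF_comp {X Y Z : DeltaInjᵒᵖ ⥤ Type} {f : X ⟶ Y} {g : Y ⟶ Z}
    (hf : IsULF f) (hg : IsULF g) : IsULF (f ≫ g) := by
  intro a b gm hgm
  simpa using IsPullback.paste_horiz (hf gm hgm) (hg gm hgm)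

/-- The category of split simplicial sets and conservative maps. -/
structure SplitSSet : Type 1 where
  /-- the underlying simplicial set -/
  X : SSet.{0}
  split : Split X

instance : Category SplitSSet where
  Hom A B := {f : A.X ⟶ B.X // Conservative f}
  id A := ⟨𝟙 A.X, conservative_id A.X⟩
  comp f g := ⟨f.1 ≫ g.1, conservative_comp f.2 g.2⟩
  id_comp f := by apply Subtype.ext; simp
  comp_id f := by apply Subtype.ext; simp
  assoc f g h := by apply Subtype.ext; simp

/-- The forgetful functor from split simplicial sets to simplicial sets. -/
def SplitSSet.forget : SplitSSet ⥤ SSet where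
  obj A := A.X
  map f := f.1

/-- The category of split decomposition spaces and cULF maps. -/
structure SplitDecomp : Type 1 where
  /-- the underlying simplicial set -/
  X : SSet.{0}
  split : Split X
  decomp : IsDecomposition X

instance : Category SplitDecomp where
  Hom A B := {f : A.X ⟶ B.X // IsCULF f}
  id A := ⟨𝟙 A.X, isCULF_id A.X⟩
  comp f g := ⟨f.1 ≫ g.1, isCULF_comp f.2 g.2⟩
  id_comp f := by apply Subtype.ext; simp
  comp_id f := by apply Subtype.ext; simp
  assoc f g h := by apply Subtype.ext; simp

/-- The forgetful functor from split decomposition spaces to simplicial sets. -/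
def SplitDecomp.forget : SplitDecomp ⥤ SSet where
  obj A := A.X
  map f := f.1

/-- The category of semi-decomposition spaces and ULF maps. -/
structure SemiDecomp : Type 1 where
  /-- the underlying semi-simplicial set -/
  Z : DeltaInjᵒᵖ ⥤ Type
  semidecomp : IsSemiDecomposition Z

instance : Category SemiDecomp where
  Hom A B := {φ : A.Z ⟶ B.Z // IsULF φ}
  id A := ⟨𝟙 A.Z, isULF_id A.Z⟩
  comp f g := ⟨f.1 ≫ g.1, isULF_comp f.2 g.2⟩
  id_comp f := by apply Subtype.ext; simp
  comp_id f := by apply Subtype.ext; simp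
  assoc f g h := by apply Subtype.ext; simp

/-- The forgetful functor from semi-decomposition spaces to semi-simplicial sets. -/
def SemiDecomp.forget : SemiDecomp ⥤ (DeltaInjᵒᵖ ⥤ Type) where
  obj A := A.Z
  map f := f.1

namespace Stmt4Aux

lemma val_lt {k : ℕ} (j : Fin ((SimplexCategory.mk k).len + 1)) : j.1 < k + 1 := by
  have h1 := j.2
  have h2 : (SimplexCategory.mk k).len = k := SimplexCategory.len_mk k
  omega

lemma fin1_eq (x y : Fin ((SimplexCategory.mk 0).len + 1)) : x = y := by
  apply Fin.ext
  have hx := val_lt x; have hy := val_lt y; omega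

lemma homExt {a b : SimplexCategory} (f g : a ⟶ b)
    (h : ∀ i, f.toOrderHom i = g.toOrderHom i) : f = g :=
  SimplexCategory.Hom.ext' _ _ (OrderHom.ext _ _ (funext h))

lemma comp_app {a b c : SimplexCategory} (f : a ⟶ b) (g : b ⟶ c) (i) :
    (f ≫ g).toOrderHom i = g.toOrderHom (f.toOrderHom i) := by
  rw [SimplexCategory.comp_toOrderHom]; rfl

lemma appCongr {a b : SimplexCategory} (φ : a ⟶ b) {x y : Fin (a.len + 1)} (h : x.1 = y.1) :
    φ.toOrderHom x = φ.toOrderHom y := congrArg _ (Fin.ext h)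

lemma map_map (X : SSet) {p q r : SimplexCategory} (a : p ⟶ q) (b : q ⟶ r)
    (ρ : X.obj (op r)) : X.map a.op (X.map b.op ρ) = X.map (a ≫ b).op ρ := by
  rw [op_comp, FunctorToTypes.map_comp_apply]

/-- The image of a constant edge map is degenerate. -/
lemma constEdge (X : SSet) {k : ℕ} (θ : (⦋1⦌ : SimplexCategory) ⟶ ⦋k⦌)
    (hθ : θ.toOrderHom 0 = θ.toOrderHom 1) (ρ : X _⦋k⦌) :
    X.map θ.op ρ ∈ Set.range (X.σ (0 : Fin 1)) := by
  have hfac : θ = SimplexCategory.σ (0 : Fin 1) ≫ vertexMap k (θ.toOrderHom 0) := by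
    apply homExt
    intro j
    rw [comp_app]
    have hv : (vertexMap k (θ.toOrderHom 0)).toOrderHom
        ((SimplexCategory.σ (0 : Fin 1)).toOrderHom j) = θ.toOrderHom 0 := rfl
    rw [hv]
    have hj := val_lt j
    have h0 : ((0 : Fin ((SimplexCategory.mk 1).len + 1))).1 = 0 := rfl
    have h1 : ((1 : Fin ((SimplexCategory.mk 1).len + 1))).1 = 1 := rfl
    rcases Nat.lt_or_ge j.1 1 with h | h
    · exact appCongr θ (by omega)
    · exact (appCongr θ (x := j) (y := 1) (by omega)).trans hθ.symm
  rw [hfac, ← map_map]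
  exact ⟨X.map (vertexMap k (θ.toOrderHom 0)).op ρ, rfl⟩

/-- A map under which some simplex pulls back to an effective simplex is injective. -/
lemma eff_inj (X : SSet) {n k : ℕ} (θ : (⦋n⦌ : SimplexCategory) ⟶ ⦋k⦌) (ρ : X _⦋k⦌)
    (he : Effective X (X.map θ.op ρ)) : Function.Injective θ.toOrderHom := by
  have hsm : StrictMono θ.toOrderHom := by
    rw [Fin.strictMono_iff_lt_succ]
    intro i
    rcases lt_or_eq_of_le (θ.toOrderHom.monotone (Fin.castSucc_le_succ i)) with h | h
    · exact h
    · exfalso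
      apply he i
      rw [map_map]
      apply constEdge
      rw [comp_app, comp_app]
      have h0 : (principalEdge n i).toOrderHom 0 = i.castSucc := Fin.ext (by
        show i.1 + ((0 : Fin ((SimplexCategory.mk 1).len + 1))).1 = i.1
        have : ((0 : Fin ((SimplexCategory.mk 1).len + 1))).1 = 0 := rfl
        omega)
      have h1 : (principalEdge n i).toOrderHom 1 = i.succ := Fin.ext (by
        show i.1 + ((1 : Fin ((SimplexCategory.mk 1).len + 1))).1 = i.1 + 1
        have : ((1 : Fin ((SimplexCategory.mk 1).len + 1))).1 = 1 := rfl
        omega)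
      rw [h0, h1, h]
  exact hsm.injective

/-- An injective monotone endomap of `Fin (m+1)` is the identity. -/
lemma inj_endo_id {m : ℕ} (f : Fin (m + 1) →o Fin (m + 1)) (hf : Function.Injective f) :
    ∀ i, f i = i := by
  have hsm : StrictMono (f : Fin (m+1) → Fin (m+1)) := f.monotone.strictMono_of_injective hf
  have hr : Set.range (f : Fin (m+1) → Fin (m+1)) = Set.range (id : Fin (m+1) → Fin (m+1)) := by
    rw [Set.range_id]
    exact Set.range_eq_univ.2 (Finite.surjective_of_injective hf)
  haveI : WellFoundedLT (Fin (m + 1)) := inferInstance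
  have h2 : (f : Fin (m+1) → Fin (m+1)) = id :=
    (StrictMono.range_inj hsm (strictMono_id (α := Fin (m+1)))).1 hr
  intro i; exact congrFun h2 i

/-- A surjection has a section through any prescribed point. -/
lemma section_thru {n m : ℕ} (g : (⦋n⦌ : SimplexCategory) ⟶ ⦋m⦌)
    (hg : Function.Surjective g.toOrderHom) (i : Fin (n + 1)) :
    ∃ s : (⦋m⦌ : SimplexCategory) ⟶ ⦋n⦌,
      s ≫ g = 𝟙 _ ∧ s.toOrderHom (g.toOrderHom i) = i := by
  classical
  let t : Fin (m + 1) → Fin (n + 1) := fun j =>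
    if j = g.toOrderHom i then i else Classical.choose (hg j)
  have hgt : ∀ j, g.toOrderHom (t j) = j := by
    intro j
    show g.toOrderHom (if j = g.toOrderHom i then i else Classical.choose (hg j)) = j
    split
    · next h => rw [h]
    · exact Classical.choose_spec (hg j)
  have hmono : Monotone t := by
    intro a b hab
    rcases eq_or_lt_of_le hab with h | h
    · exact le_of_eq (congrArg t h)
    · by_contra hc
      push_neg at hc
      have := g.toOrderHom.monotone hc.le
      rw [hgt, hgt] at this
      exact absurd (lt_of_lt_of_le h this) (lt_irrefl _)
  refine ⟨SimplexCategory.mkHom ⟨t, hmono⟩, ?_, ?_⟩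
  · apply homExt
    intro j
    rw [comp_app, SimplexCategory.id_toOrderHom]
    exact hgt j
  · show t (g.toOrderHom i) = i
    simp only [t, if_pos rfl]

/-- The codegeneracy collapsing `i+1` onto `i`. -/
def collapseAt (m : ℕ) (i : Fin (m + 1)) : (⦋m + 1⦌ : SimplexCategory) ⟶ ⦋m⦌ :=
  SimplexCategory.mkHom
    { toFun := fun j => ⟨if j.1 ≤ i.1 then j.1 else j.1 - 1, by
        have := j.2; have := i.2; split <;> omega⟩
      monotone' := fun a b h => by
        have h' : a.1 ≤ b.1 := h
        simp only [Fin.mk_le_mk]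
        split <;> split <;> omega }

/-- A section of `collapseAt`: skips `i+1`. -/
def sectAt (m : ℕ) (i : Fin (m + 1)) : (⦋m⦌ : SimplexCategory) ⟶ ⦋m + 1⦌ :=
  SimplexCategory.mkHom
    { toFun := fun j => ⟨if j.1 ≤ i.1 then j.1 else j.1 + 1, by
        have := j.2; split <;> omega⟩
      monotone' := fun a b h => by
        have h' : a.1 ≤ b.1 := h
        simp only [Fin.mk_le_mk]
        split <;> split <;> omega }

lemma collapseAt_app (m : ℕ) (i : Fin (m + 1)) (j) :
    ((collapseAt m i).toOrderHom j).1 = if j.1 ≤ i.1 then j.1 else j.1 - 1 := rfl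

lemma sectAt_app (m : ℕ) (i : Fin (m + 1)) (j) :
    ((sectAt m i).toOrderHom j).1 = if j.1 ≤ i.1 then j.1 else j.1 + 1 := rfl

lemma pe_app (n : ℕ) (i : Fin n) (j) :
    ((principalEdge n i).toOrderHom j).1 = i.1 + j.1 := rfl

lemma vx_app (m : ℕ) (i : Fin (m + 1)) (j) : (vertexMap m i).toOrderHom j = i := rfl

lemma collapse_surj (m : ℕ) (i : Fin (m + 1)) :
    Function.Surjective (collapseAt m i).toOrderHom := by
  intro t
  refine ⟨(sectAt m i).toOrderHom t, Fin.ext ?_⟩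
  rw [collapseAt_app, sectAt_app]
  have := val_lt t
  split_ifs <;> omega

lemma pushoutAt (m : ℕ) (i : Fin (m + 1)) :
    IsPushout (toZero 1) (principalEdge (m + 1) i) (vertexMap m i) (collapseAt m i) := by
  obtain ⟨e0, he0v⟩ : ∃ e : Fin ((SimplexCategory.mk 1).len + 1), e.1 = 0 :=
    ⟨⟨0, by omega⟩, rfl⟩
  obtain ⟨e1, he1v⟩ : ∃ e : Fin ((SimplexCategory.mk 1).len + 1), e.1 = 1 :=
    ⟨⟨1, by rw [SimplexCategory.len_mk]; omega⟩, rfl⟩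
  have w : toZero 1 ≫ vertexMap m i = principalEdge (m + 1) i ≫ collapseAt m i := by
    apply homExt
    intro j
    rw [comp_app, comp_app, vx_app]
    apply Fin.ext
    rw [collapseAt_app, pe_app]
    have hj := val_lt j
    split_ifs <;> omega
  refine IsPushout.of_isColimit' ⟨w⟩ ?_
  refine PushoutCocone.IsColimit.mk w (fun s => sectAt m i ≫ s.inr) ?_ ?_ ?_
  · -- fac_left
    intro s
    have hcond : ∀ j, s.inl.toOrderHom ((toZero 1).toOrderHom j)
        = s.inr.toOrderHom ((principalEdge (m + 1) i).toOrderHom j) := by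
      intro j
      have := congrArg (fun φ => SimplexCategory.Hom.toOrderHom φ j) s.condition
      simpa only [comp_app] using this
    apply homExt
    intro j
    rw [comp_app, comp_app, vx_app]
    have h1 : s.inl.toOrderHom j = s.inl.toOrderHom ((toZero 1).toOrderHom e0) :=
      congrArg _ (fin1_eq _ _)
    rw [h1, hcond e0]
    apply appCongr
    rw [sectAt_app, pe_app]
    split_ifs <;> omega
  · -- fac_right
    intro s
    have hcond : ∀ j, s.inl.toOrderHom ((toZero 1).toOrderHom j)
        = s.inr.toOrderHom ((principalEdge (m + 1) i).toOrderHom j) := by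
      intro j
      have := congrArg (fun φ => SimplexCategory.Hom.toOrderHom φ j) s.condition
      simpa only [comp_app] using this
    have hkey : s.inr.toOrderHom ((principalEdge (m + 1) i).toOrderHom e0)
        = s.inr.toOrderHom ((principalEdge (m + 1) i).toOrderHom e1) := by
      rw [← hcond e0, ← hcond e1]
      exact congrArg _ (fin1_eq _ _)
    apply homExt
    intro j
    rw [comp_app, comp_app]
    have hj := val_lt j
    by_cases hji : j.1 = i.1 + 1
    · have a1 : s.inr.toOrderHom ((sectAt m i).toOrderHom ((collapseAt m i).toOrderHom j))
          = s.inr.toOrderHom ((principalEdge (m + 1) i).toOrderHom e0) := by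
        apply appCongr
        rw [pe_app]
        have hs : ((sectAt m i).toOrderHom ((collapseAt m i).toOrderHom j)).1
            = if ((collapseAt m i).toOrderHom j).1 ≤ i.1
              then ((collapseAt m i).toOrderHom j).1
              else ((collapseAt m i).toOrderHom j).1 + 1 := sectAt_app m i _
        rw [hs, collapseAt_app]
        split_ifs <;> omega
      have a2 : s.inr.toOrderHom ((principalEdge (m + 1) i).toOrderHom e1)
          = s.inr.toOrderHom j := by
        apply appCongr
        rw [pe_app]
        omega
      rw [a1, hkey, a2]
    · apply appCongr
      have hs : ((sectAt m i).toOrderHom ((collapseAt m i).toOrderHom j)).1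
          = if ((collapseAt m i).toOrderHom j).1 ≤ i.1
            then ((collapseAt m i).toOrderHom j).1
            else ((collapseAt m i).toOrderHom j).1 + 1 := sectAt_app m i _
      rw [hs, collapseAt_app]
      split_ifs <;> omega
  · -- uniq
    intro s v hl hr
    apply homExt
    intro t
    rw [comp_app]
    have e : v.toOrderHom t
        = v.toOrderHom ((collapseAt m i).toOrderHom ((sectAt m i).toOrderHom t)) := by
      apply appCongr
      rw [collapseAt_app, sectAt_app]
      have := val_lt t
      split_ifs <;> omega
    rw [e]
    have := congrArg (fun φ => SimplexCategory.Hom.toOrderHom φ ((sectAt m i).toOrderHom t)) hr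
    simpa only [comp_app] using this

lemma toZero_eq_sigma : toZero 1 = SimplexCategory.σ (0 : Fin 1) :=
  homExt _ _ fun _ => fin1_eq _ _

lemma toZero_generic : IsGeneric (toZero 1) := ⟨rfl, fin1_eq _ _⟩

lemma pe_free (n : ℕ) (i : Fin n) : IsFree (principalEdge n i) := by
  intro j
  show i.1 + j.1 = (i.1 + ((0 : Fin ((SimplexCategory.mk 1).len + 1))).1) + j.1
  have : ((0 : Fin ((SimplexCategory.mk 1).len + 1))).1 = 0 := rfl
  omega

/-- Existence. -/
lemma exist (X : SSet) (hX : IsDecomposition X) :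
    ∀ n (σ : X _⦋n⦌), ∃ m : ℕ, ∃ q : (⦋n⦌ : SimplexCategory) ⟶ ⦋m⦌, ∃ ρ : X _⦋m⦌,
      Function.Surjective q.toOrderHom ∧ Effective X ρ ∧ σ = X.map q.op ρ := by
  intro n
  induction n using Nat.strong_induction_on with
  | _ n IH =>
    intro σ
    by_cases he : Effective X σ
    · refine ⟨n, 𝟙 _, σ, ?_, he, ?_⟩
      · rw [SimplexCategory.id_toOrderHom]
        exact fun x => ⟨x, rfl⟩
      · rw [op_id, FunctorToTypes.map_id_apply]
    · simp only [Effective, not_forall, not_not] at he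
      obtain ⟨i, x, hx⟩ := he
      cases n with
      | zero => exact absurd i.2 (Nat.not_lt_zero _)
      | succ m =>
        have hpb := hX (toZero 1) (principalEdge (m + 1) i) (vertexMap m i)
          (collapseAt m i) toZero_generic (pe_free (m + 1) i) (pushoutAt m i)
        have w : X.map (toZero 1).op x = X.map (principalEdge (m + 1) i).op σ := by
          rw [toZero_eq_sigma]
          exact hx
        obtain ⟨τ, -, hsnd⟩ := Types.exists_of_isPullback hpb x σ w
        obtain ⟨l, q, ρ, hq, hρ, hτ⟩ := IH m (by omega) τ
        refine ⟨l, collapseAt m i ≫ q, ρ, ?_, hρ, ?_⟩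
        · rw [SimplexCategory.comp_toOrderHom]
          exact Function.Surjective.comp (g := q.toOrderHom) hq (collapse_surj m i)
        · rw [← map_map, ← hτ, hsnd]

/-- Uniqueness. -/
lemma uniq (X : SSet) {n : ℕ} (σ : X _⦋n⦌)
    (p q : Σ m : ℕ, (SimplexCategory.mk n ⟶ SimplexCategory.mk m) ×
        X.obj (op (SimplexCategory.mk m)))
    (hp : Function.Surjective p.2.1.toOrderHom ∧ Effective X p.2.2 ∧ σ = X.map p.2.1.op p.2.2)
    (hq : Function.Surjective q.2.1.toOrderHom ∧ Effective X q.2.2 ∧ σ = X.map q.2.1.op q.2.2) :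
    p = q := by
  obtain ⟨m, g, τ⟩ := p
  obtain ⟨m', g', τ'⟩ := q
  obtain ⟨hgs, hτe, hστ⟩ := hp
  obtain ⟨hgs', hτe', hστ'⟩ := hq
  have key : ∀ (mm mm' : ℕ) (g : (⦋n⦌ : SimplexCategory) ⟶ ⦋mm⦌)
      (g' : (⦋n⦌ : SimplexCategory) ⟶ ⦋mm'⦌) (τ : X _⦋mm⦌) (τ' : X _⦋mm'⦌)
      (_ : Effective X τ) (_ : X.map g.op τ = X.map g'.op τ')
      (s : (⦋mm⦌ : SimplexCategory) ⟶ ⦋n⦌) (_ : s ≫ g = 𝟙 _),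
      τ = X.map (s ≫ g').op τ' ∧ Function.Injective (s ≫ g').toOrderHom := by
    intro mm mm' g g' τ τ' hτe heq s hs
    have h1 : τ = X.map (s ≫ g').op τ' := by
      rw [← map_map, ← heq, map_map, hs, op_id, FunctorToTypes.map_id_apply]
    refine ⟨h1, eff_inj X (s ≫ g') τ' ?_⟩
    rw [← h1]; exact hτe
  have heqστ : X.map g.op τ = X.map g'.op τ' := hστ ▸ hστ'
  obtain ⟨s, hs, -⟩ := section_thru g hgs 0
  obtain ⟨s', hs', -⟩ := section_thru g' hgs' 0
  have hle : m ≤ m' := by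
    have hinj := (key m m' g g' τ τ' hτe heqστ s hs).2
    have hc := Fintype.card_le_of_injective _ hinj
    simpa [SimplexCategory.len_mk] using hc
  have hle' : m' ≤ m := by
    have hinj := (key m' m g' g τ' τ hτe' heqστ.symm s' hs').2
    have hc := Fintype.card_le_of_injective _ hinj
    simpa [SimplexCategory.len_mk] using hc
  have hmm : m = m' := le_antisymm hle hle'
  subst hmm
  have hid : ∀ (s : (⦋m⦌ : SimplexCategory) ⟶ ⦋n⦌), s ≫ g = 𝟙 _ → s ≫ g' = 𝟙 _ := by
    intro s hs
    have hinj := (key m m g g' τ τ' hτe heqστ s hs).2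
    apply homExt
    intro j
    rw [SimplexCategory.id_toOrderHom]
    have hinj' : Function.Injective
        (((s ≫ g').toOrderHom : Fin (m + 1) →o Fin (m + 1)) :
          Fin (m + 1) → Fin (m + 1)) := hinj
    exact inj_endo_id ((s ≫ g').toOrderHom : Fin (m + 1) →o Fin (m + 1)) hinj' j
  have hττ' : τ = τ' := by
    have h1 := (key m m g g' τ τ' hτe heqστ s hs).1
    rw [hid s hs, op_id, FunctorToTypes.map_id_apply] at h1
    exact h1
  have hgg' : g = g' := by
    apply homExt
    intro i
    obtain ⟨si, hsi, hsival⟩ := section_thru g hgs i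
    have h2 := congrArg (fun φ => SimplexCategory.Hom.toOrderHom φ (g.toOrderHom i))
      (hid si hsi)
    simp only [comp_app, SimplexCategory.id_toOrderHom] at h2
    rw [hsival] at h2
    exact h2.symm
  rw [hgg', hττ']

end Stmt4Aux

theorem statement4 (X : SSet) (hX : IsDecomposition X)
    (hc : Function.Injective (X.σ (0 : Fin 1) : X _⦋0⦌ ⟶ X _⦋1⦌))
    (n : ℕ) (σ : X _⦋n⦌) :
    ∃! p : Σ m : ℕ, (SimplexCategory.mk n ⟶ SimplexCategory.mk m) ×
        X.obj (op (SimplexCategory.mk m)),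
      Function.Surjective p.2.1.toOrderHom ∧ Effective X p.2.2 ∧ σ = X.map p.2.1.op p.2.2 := by
  obtain ⟨m, q, ρ, hs, he, heq⟩ := Stmt4Aux.exist X hX n σ
  refine ⟨⟨m, q, ρ⟩, ⟨hs, he, heq⟩, ?_⟩
  intro y hy
  exact Stmt4Aux.uniq X σ y ⟨m, q, ρ⟩ hy ⟨hs, he, heq⟩
end

section
/- Let f : Y → X be a cULF map between complete simplicial sets. Then for every word w ∈ {0,1,a}^n, f maps Y_w into X_w, and the commutative square whose horizontal maps are the long-edge maps Y_w → Y_1 and X_w → X_1 (restrictions of the maps induced by the unique generic map [1] → [n]) and whose vertical maps are induced by f, is a pullback of sets. -/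
open CategoryTheory CategoryTheory.Limits Simplicial Opposite

/-- Element-wise description of a pullback square of types. -/
lemma pb_elt {P A B C : Type u} {p1 : P ⟶ A} {p2 : P ⟶ B} {fC : A ⟶ C} {gC : B ⟶ C}
    (h : IsPullback p1 p2 fC gC) (a : A) (b : B) (hab : fC a = gC b) :
    ∃! p : P, p1 p = a ∧ p2 p = b := by
  let fa : PUnit.{u+1} ⟶ A := TypeCat.ofHom fun _ => a
  let fb : PUnit.{u+1} ⟶ B := TypeCat.ofHom fun _ => b
  have hw : fa ≫ fC = fb ≫ gC := ConcreteCategory.hom_ext _ _ fun _ => hab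
  refine ⟨h.lift fa fb hw PUnit.unit, ⟨?_, ?_⟩, ?_⟩
  · exact ConcreteCategory.congr_hom (h.lift_fst fa fb hw) PUnit.unit
  · exact ConcreteCategory.congr_hom (h.lift_snd fa fb hw) PUnit.unit
  · rintro q ⟨hq1, hq2⟩
    have hq : (TypeCat.ofHom fun _ : PUnit.{u+1} => q) = h.lift fa fb hw := by
      apply h.hom_ext
      · rw [h.lift_fst fa fb hw]; exact ConcreteCategory.hom_ext _ _ fun u => hq1
      · rw [h.lift_snd fa fb hw]; exact ConcreteCategory.hom_ext _ _ fun u => hq2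
    exact ConcreteCategory.congr_hom hq PUnit.unit

lemma generic_longEdge (n : ℕ) : IsGeneric (longEdgeMap n) := by
  constructor
  · apply Fin.ext
    show ((0 : Fin 2).1 * n : ℕ) = ((0 : Fin (n + 1)) : ℕ)
    simp
  · apply Fin.ext
    show ((Fin.last 1 : Fin 2).1 * n : ℕ) = ((Fin.last n : Fin (n + 1)) : ℕ)
    simp

lemma generic_sigma0 : IsGeneric (SimplexCategory.σ (0 : Fin 1)) :=
  by constructor <;> decide

/-- A cULF map reflects (and preserves) degeneracy of edges. -/
lemma edge_degen_iff {Y X : SSet} (f : Y ⟶ X) (hf : IsCULF f) (e : Y _⦋1⦌) :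
    f.app (op (SimplexCategory.mk 1)) e ∈ Set.range (X.σ (0 : Fin 1)) ↔
      e ∈ Set.range (Y.σ (0 : Fin 1)) := by
  constructor
  · rintro ⟨x, hx⟩
    have pb := hf (SimplexCategory.σ (0 : Fin 1)) generic_sigma0
    obtain ⟨y, ⟨hy1, hy2⟩, -⟩ := pb_elt pb x e hx
    exact ⟨y, hy2⟩
  · rintro ⟨y, hy⟩
    refine ⟨f.app (op (SimplexCategory.mk 0)) y, ?_⟩
    have := FunctorToTypes.naturality f (SimplexCategory.σ (0 : Fin 1)).op y
    exact this.symm.trans (congr_arg _ hy)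

lemma word_mem_iff {Y X : SSet} (f : Y ⟶ X) (hf : IsCULF f) {n : ℕ} (w : Fin n → Letter)
    (σ : Y _⦋n⦌) :
    σ ∈ wordSet Y w ↔ f.app (op (SimplexCategory.mk n)) σ ∈ wordSet X w := by
  have key : ∀ i : Fin n,
      X.map (principalEdge n i).op (f.app (op (SimplexCategory.mk n)) σ)
        = f.app (op (SimplexCategory.mk 1)) (Y.map (principalEdge n i).op σ) :=
    fun i => (FunctorToTypes.naturality f (principalEdge n i).op σ).symm
  unfold wordSet
  simp only [Set.mem_setOf_eq]
  refine forall_congr' fun i => ?_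
  rw [key i]
  cases hwi : w i <;> simp only [edgeSet]
  · exact (edge_degen_iff f hf _).symm
  · simp
  · simp only [Set.mem_compl_iff]
    exact not_congr (edge_degen_iff f hf _).symm

theorem statement5 (Y X : SSet) (hY : Complete Y) (hX : Complete X)
    (f : Y ⟶ X) (hf : IsCULF f) (n : ℕ) (w : Fin n → Letter) :
    (∀ σ ∈ wordSet Y w, f.app (op (SimplexCategory.mk n)) σ ∈ wordSet X w) ∧
    (∀ (η : Y _⦋1⦌) (ξ : X _⦋n⦌), ξ ∈ wordSet X w →
      X.map (longEdgeMap n).op ξ = f.app (op (SimplexCategory.mk 1)) η →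
      ∃! υ : Y _⦋n⦌, υ ∈ wordSet Y w ∧ Y.map (longEdgeMap n).op υ = η ∧
        f.app (op (SimplexCategory.mk n)) υ = ξ) := by
  constructor
  · intro σ hσ
    exact (word_mem_iff f hf w σ).mp hσ
  · intro η ξ hξ hlong
    have pb := hf (longEdgeMap n) (generic_longEdge n)
    obtain ⟨υ, ⟨hυ1, hυ2⟩, huniq⟩ := pb_elt pb ξ η hlong
    refine ⟨υ, ⟨?_, hυ2, hυ1⟩, ?_⟩
    · rw [word_mem_iff f hf w υ, hυ1]
      exact hξ
    · rintro υ' ⟨-, h2, h3⟩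
      exact huniq υ' ⟨h3, h2⟩
end
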